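/- arXiv:2010.00030 — 6 statements merged into one kernel-verified Lean document; each statement's English description precedes it below -/
import Mathlib

section
/- Let φ be a CaTL formula in which every task has duration d ≥ 1 and every task's proposition π satisfies L⁻¹(π) ≠ ∅ (some state carries the label). Let s_J be the team trajectory of the full team J, and let α be an assignment such that for every leaf λ carrying a task with proposition π_λ, α(λ) contains every agent j ∈ J for which there exist τ ∈ ℕ and q ∈ Q with s_j τ = some q and π_λ ∈ L(q). Then for every time t ∈ ℕ and every capability c ∈ Cap, ρ(s_J, t, φ) ≤ ce(α, v_0)(c) (as extended reals), where v_0 is the root of the syntax tree of φ; in particular ρ(s_J, t, φ) ≤ min over c ∈ Cap of ce(α, v_0)(c). -/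
open scoped Classical

/-- A CaTL task `T = (d, π, cp_T, cp)`: a duration, an atomic proposition, a nonempty
finite set of required capabilities, and a counting map. -/
structure CTask (AP Cap : Type) where
  dur : ℕ
  prop : AP
  cpT : Finset Cap
  cpT_nonempty : cpT.Nonempty
  cp : Cap → ℤ

/-- CaTL formulas: `φ ::= T | φ₁ ∧ φ₂ | φ₁ ∨ φ₂ | φ₁ U_[a,b] φ₂ | F_[a,b] φ | G_[a,b] φ`
with `a ≤ b`. -/
inductive CaTL (AP Cap : Type) : Type where
  | task (T : CTask AP Cap)
  | and (φ₁ φ₂ : CaTL AP Cap)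
  | or (φ₁ φ₂ : CaTL AP Cap)
  | untl (a b : ℕ) (hab : a ≤ b) (φ₁ φ₂ : CaTL AP Cap)
  | ev (a b : ℕ) (hab : a ≤ b) (φ : CaTL AP Cap)
  | alw (a b : ℕ) (hab : a ≤ b) (φ : CaTL AP Cap)

/-- CaTL syntax trees with an assignment of agents baked into the leaves:
each leaf (task occurrence) `λ` carries the set `A = α(λ) ⊆ J` of agents assigned to it. -/
inductive ATree (AP Cap J : Type) : Type where
  | leaf (T : CTask AP Cap) (A : Finset J)
  | and (l r : ATree AP Cap J)
  | or (l r : ATree AP Cap J)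
  | untl (a b : ℕ) (hab : a ≤ b) (l r : ATree AP Cap J)
  | ev (a b : ℕ) (hab : a ≤ b) (c : ATree AP Cap J)
  | alw (a b : ℕ) (hab : a ≤ b) (c : ATree AP Cap J)

variable {Q AP Cap J : Type}

/-- `n_{q,c}^{J'}(t)`: the number of agents `j ∈ J'` with `s j t = some q` and `c ∈ Cap_j`. -/
noncomputable def nAgents (caps : J → Finset Cap) (s : J → ℕ → Option Q)
    (J' : Finset J) (q : Q) (c : Cap) (t : ℕ) : ℕ :=
  (J'.filter (fun j => s j t = some q ∧ c ∈ caps j)).card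

/-- Quantitative CaTL semantics (availability robustness) `ρ(s_{J'}, t, φ) ∈ EReal`.
The infimum over an empty index set is `+∞` and the supremum is `-∞`. -/
noncomputable def rob (L : Q → Set AP) (caps : J → Finset Cap) (s : J → ℕ → Option Q)
    (J' : Finset J) : CaTL AP Cap → ℕ → EReal
  | .task T, t => ⨅ c ∈ T.cpT, ⨅ τ ∈ Finset.Ico t (t + T.dur), ⨅ q ∈ {q : Q | T.prop ∈ L q},
      ((((nAgents caps s J' q c τ : ℤ) - T.cp c : ℤ) : ℝ) : EReal)
  | .and φ₁ φ₂, t => min (rob L caps s J' φ₁ t) (rob L caps s J' φ₂ t)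
  | .or φ₁ φ₂, t => max (rob L caps s J' φ₁ t) (rob L caps s J' φ₂ t)
  | .untl a b _ φ₁ φ₂, t => ⨆ t' ∈ Finset.Icc (t + a) (t + b),
      min (rob L caps s J' φ₂ t') (⨅ τ ∈ Finset.Icc t t', rob L caps s J' φ₁ τ)
  | .ev a b _ φ, t => ⨆ τ ∈ Finset.Icc (t + a) (t + b), rob L caps s J' φ τ
  | .alw a b _ φ, t => ⨅ τ ∈ Finset.Icc (t + a) (t + b), rob L caps s J' φ τ

/-- The CaTL formula whose syntax tree is the given tree (forgetting the assignment). -/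
def ATree.formula : ATree AP Cap J → CaTL AP Cap
  | .leaf T _ => .task T
  | .and l r => .and l.formula r.formula
  | .or l r => .or l.formula r.formula
  | .untl a b h l r => .untl a b h l.formula r.formula
  | .ev a b h c => .ev a b h c.formula
  | .alw a b h c => .alw a b h c.formula

/-- Capability excess `ce(α, v) : Cap → ℤ ∪ {+∞}` (embedded in `EReal`):
at a leaf it is the number of assigned agents with capability `c` minus `cp(c)` for
required capabilities and `+∞` otherwise; at a disjunction it is the componentwise max
of the children; at every other internal node it is the componentwise min. -/
noncomputable def ATree.ce (caps : J → Finset Cap) : ATree AP Cap J → Cap → EReal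
  | .leaf T A, c =>
      if c ∈ T.cpT then (((((A.filter (fun j => c ∈ caps j)).card : ℤ) - T.cp c : ℤ) : ℝ) : EReal)
      else (⊤ : EReal)
  | .and l r, c => min (l.ce caps c) (r.ce caps c)
  | .or l r, c => max (l.ce caps c) (r.ce caps c)
  | .untl _ _ _ l r, c => min (l.ce caps c) (r.ce caps c)
  | .ev _ _ _ t, c => t.ce caps c
  | .alw _ _ _ t, c => t.ce caps c

/-- An assignment is eligible for a syntax tree if the capability excess at the root
is nonnegative for every capability. -/
def ATree.elig (caps : J → Finset Cap) (T : ATree AP Cap J) : Prop :=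
  ∀ c : Cap, 0 ≤ T.ce caps c

/-- Hypotheses on the leaves: every task has duration `d ≥ 1`, its proposition labels
some state, and the assignment of every leaf contains every agent that ever occupies a
state labeled by the leaf's proposition. -/
def ATree.goodLeaves (L : Q → Set AP) (s : J → ℕ → Option Q) : ATree AP Cap J → Prop
  | .leaf T A => 1 ≤ T.dur ∧ (∃ q, T.prop ∈ L q) ∧
      ∀ j : J, (∃ τ q, s j τ = some q ∧ T.prop ∈ L q) → j ∈ A
  | .and l r => l.goodLeaves L s ∧ r.goodLeaves L s
  | .or l r => l.goodLeaves L s ∧ r.goodLeaves L s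
  | .untl _ _ _ l r => l.goodLeaves L s ∧ r.goodLeaves L s
  | .ev _ _ _ c => c.goodLeaves L s
  | .alw _ _ _ c => c.goodLeaves L s

lemma rob_le_ce_aux
    [Fintype Q] [Fintype Cap] [Fintype J] [DecidableEq J]
    (L : Q → Set AP) (caps : J → Finset Cap) (s : J → ℕ → Option Q) :
    ∀ (T : ATree AP Cap J), T.goodLeaves L s → ∀ (t : ℕ) (c : Cap),
      rob L caps s Finset.univ T.formula t ≤ T.ce caps c := by
  intro T
  induction T with
  | leaf T A =>
    rintro ⟨hd, ⟨q, hq⟩, hA⟩ t c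
    by_cases hc : c ∈ T.cpT
    · simp only [ATree.formula, rob, ATree.ce, if_pos hc]
      refine le_trans (iInf₂_le c hc) ?_
      refine le_trans (iInf₂_le t (by simp [Finset.mem_Ico]; omega)) ?_
      refine le_trans (iInf₂_le q hq) ?_
      have hcard : nAgents caps s Finset.univ q c t ≤
          (A.filter (fun j => c ∈ caps j)).card := by
        apply Finset.card_le_card
        intro j hj
        simp only [nAgents, Finset.mem_filter] at hj ⊢
        exact ⟨hA j ⟨t, q, hj.2.1, hq⟩, hj.2.2⟩
      exact EReal.coe_le_coe_iff.mpr (Int.cast_le.mpr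
        (sub_le_sub_right (Int.ofNat_le.mpr hcard) _))
    · simp [ATree.ce, if_neg hc]
  | and l r ihl ihr =>
    rintro ⟨hl, hr⟩ t c
    exact min_le_min (ihl hl t c) (ihr hr t c)
  | or l r ihl ihr =>
    rintro ⟨hl, hr⟩ t c
    exact max_le_max (ihl hl t c) (ihr hr t c)
  | untl a b hab l r ihl ihr =>
    rintro ⟨hl, hr⟩ t c
    simp only [ATree.formula, rob, ATree.ce]
    refine iSup₂_le fun t' ht' => le_min ?_ ?_
    · refine le_trans (min_le_right _ _) ?_
      refine le_trans (iInf₂_le t (by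
        simp only [Finset.mem_Icc] at ht' ⊢; omega)) (ihl hl t c)
    · exact le_trans (min_le_left _ _) (ihr hr t' c)
  | ev a b hab T ih =>
    intro hT t c
    simp only [ATree.formula, rob, ATree.ce]
    exact iSup₂_le fun τ _ => ih hT τ c
  | alw a b hab T ih =>
    intro hT t c
    simp only [ATree.formula, rob, ATree.ce]
    exact le_trans (iInf₂_le (t + a) (by simp [Finset.mem_Icc]; omega)) (ih hT (t + a) c)

/-- for the full team `J` and an assignment whose leaves contain every
agent that could possibly service them, the robustness of `φ` at any time `t` is at
most the capability excess of the root for every capability `c` (and consequently at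
most the minimum of the capability excess over all capabilities). -/
theorem robustness_le_capability_excess
    [Fintype Q] [Fintype Cap] [Fintype J] [DecidableEq J]
    (L : Q → Set AP) (caps : J → Finset Cap) (s : J → ℕ → Option Q)
    (T : ATree AP Cap J) (hT : T.goodLeaves L s) (t : ℕ) :
    (∀ c : Cap, rob L caps s Finset.univ T.formula t ≤ T.ce caps c) ∧
      rob L caps s Finset.univ T.formula t ≤ ⨅ c : Cap, T.ce caps c := by
  have h := fun c => rob_le_ce_aux L caps s T hT t c
  exact ⟨h, le_iInf h⟩
end

section
/- (Base case: capability excess bounds task robustness.) Let T = (d, π, cp_T, cp) be a task with duration d ≥ 1 and with L⁻¹(π) ≠ ∅, let s_J be the team trajectory of the full team J, and let J' ⊆ J be any set of agents containing every agent j ∈ J for which there exist τ ∈ ℕ and q ∈ Q with s_j τ = some q and π ∈ L(q). Then for every time t ∈ ℕ, ρ(s_J, t, T) ≤ min over c ∈ cp_T of (|{j ∈ J' : c ∈ Cap_j}| − cp(c)). -/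
open scoped Classical

variable {Q AP Cap J : Type}

/-- base case: if the task has duration `d ≥ 1` and some state carries
`π`, and `J'` contains every agent that ever occupies a `π`-labeled state, then the
robustness of the task for the full team is at most
`min_{c ∈ cp_T} (|{j ∈ J' : c ∈ Cap_j}| − cp(c))`. -/
theorem task_robustness_le_capability_excess
    [Fintype Q] [Fintype Cap] [Fintype J] [DecidableEq J]
    (L : Q → Set AP) (caps : J → Finset Cap) (s : J → ℕ → Option Q)
    (T : CTask AP Cap) (hd : 1 ≤ T.dur) (hq : ∃ q, T.prop ∈ L q)
    (J' : Finset J)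
    (hJ' : ∀ j : J, (∃ τ q, s j τ = some q ∧ T.prop ∈ L q) → j ∈ J')
    (t : ℕ) :
    rob L caps s Finset.univ (.task T) t ≤
      ⨅ c ∈ T.cpT, (((((J'.filter (fun j => c ∈ caps j)).card : ℤ) - T.cp c : ℤ) : ℝ) : EReal) := by
  obtain ⟨q0, hq0⟩ := hq
  simp only [rob]
  refine le_iInf₂ fun c hc => ?_
  have h1 : (⨅ c ∈ T.cpT, ⨅ τ ∈ Finset.Ico t (t + T.dur), ⨅ q ∈ {q : Q | T.prop ∈ L q},
      ((((nAgents caps s Finset.univ q c τ : ℤ) - T.cp c : ℤ) : ℝ) : EReal)) ≤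
      ((((nAgents caps s Finset.univ q0 c t : ℤ) - T.cp c : ℤ) : ℝ) : EReal) := by
    refine le_trans (iInf₂_le c hc) ?_
    refine le_trans (iInf₂_le t ?_) (iInf₂_le q0 hq0)
    simp [Finset.mem_Ico]
    omega
  refine le_trans h1 ?_
  have hn : nAgents caps s Finset.univ q0 c t ≤ (J'.filter (fun j => c ∈ caps j)).card := by
    apply Finset.card_le_card
    intro j hj
    simp only [nAgents, Finset.mem_filter] at hj ⊢
    exact ⟨hJ' j ⟨t, q0, hj.2.1, hq0⟩, hj.2.2⟩
  have : ((nAgents caps s Finset.univ q0 c t : ℤ) - T.cp c : ℤ) ≤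
      (((J'.filter (fun j => c ∈ caps j)).card : ℤ) - T.cp c : ℤ) := by
    have := Int.ofNat_le.mpr hn; omega
  exact EReal.coe_le_coe_iff.mpr (by exact_mod_cast this)
end

section
/- (Pruning at disjunction preserves eligibility of the original tree.) Let T_φ be the syntax tree of a CaTL formula φ, let v be a disjunction node of T_φ, and let v' be a child of v. Let T' be the tree obtained from T_φ by replacing the subtree rooted at v with the subtree rooted at v', and for an assignment α on T_φ let α' be the induced assignment on T' (α' agrees with α on every leaf of T'). If α' is eligible for T', then α is eligible for T_φ. -/
open scoped Classical

variable {Q AP Cap J : Type}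

/-- One-hole contexts for CaTL syntax trees: a syntax tree with one designated
subtree position (node) left open. -/
inductive Ctx (AP Cap J : Type) : Type where
  | hole
  | andL (C : Ctx AP Cap J) (r : ATree AP Cap J)
  | andR (l : ATree AP Cap J) (C : Ctx AP Cap J)
  | orL (C : Ctx AP Cap J) (r : ATree AP Cap J)
  | orR (l : ATree AP Cap J) (C : Ctx AP Cap J)
  | untlL (a b : ℕ) (hab : a ≤ b) (C : Ctx AP Cap J) (r : ATree AP Cap J)
  | untlR (a b : ℕ) (hab : a ≤ b) (l : ATree AP Cap J) (C : Ctx AP Cap J)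
  | ev (a b : ℕ) (hab : a ≤ b) (C : Ctx AP Cap J)
  | alw (a b : ℕ) (hab : a ≤ b) (C : Ctx AP Cap J)

/-- Filling the hole of a context with a tree: the result is the full syntax tree in
which the given tree is the subtree rooted at the designated node; all other leaves
(and hence the assignment on them) are unchanged. -/
def Ctx.fill : Ctx AP Cap J → ATree AP Cap J → ATree AP Cap J
  | .hole, t => t
  | .andL C r, t => .and (C.fill t) r
  | .andR l C, t => .and l (C.fill t)
  | .orL C r, t => .or (C.fill t) r
  | .orR l C, t => .or l (C.fill t)
  | .untlL a b h C r, t => .untl a b h (C.fill t) r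
  | .untlR a b h l C, t => .untl a b h l (C.fill t)
  | .ev a b h C, t => .ev a b h (C.fill t)
  | .alw a b h C, t => .alw a b h (C.fill t)

theorem ce_fill_mono (caps : J → Finset Cap) (C : Ctx AP Cap J) (t t' : ATree AP Cap J)
    (h : ∀ c, ATree.ce caps t c ≤ ATree.ce caps t' c) :
    ∀ c, ATree.ce caps (C.fill t) c ≤ ATree.ce caps (C.fill t') c := by
  induction C with
  | hole => exact h
  | andL C r ih => intro c; exact min_le_min (ih c) le_rfl
  | andR l C ih => intro c; exact min_le_min le_rfl (ih c)
  | orL C r ih => intro c; exact max_le_max (ih c) le_rfl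
  | orR l C ih => intro c; exact max_le_max le_rfl (ih c)
  | untlL a b hab C r ih => intro c; exact min_le_min (ih c) le_rfl
  | untlR a b hab l C ih => intro c; exact min_le_min le_rfl (ih c)
  | ev a b hab C ih => exact ih
  | alw a b hab C ih => exact ih

/-- pruning at a disjunction preserves eligibility of the original tree.
If the tree obtained by replacing the subtree rooted at a disjunction node by (the
subtree rooted at) one of its children is eligible for the induced assignment, then the
original tree is eligible. -/
theorem prune_disjunction_preserves_eligibility
    (caps : J → Finset Cap) (C : Ctx AP Cap J) (τ₁ τ₂ : ATree AP Cap J)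
    (h : ATree.elig caps (C.fill τ₁) ∨ ATree.elig caps (C.fill τ₂)) :
    ATree.elig caps (C.fill (.or τ₁ τ₂)) := by
  intro c
  rcases h with h | h
  · exact le_trans (h c) (ce_fill_mono caps C τ₁ _ (fun c => le_max_left _ _) c)
  · exact le_trans (h c) (ce_fill_mono caps C τ₂ _ (fun c => le_max_right _ _) c)
end

section
/- (Swapping a conjunction with an upstream chain of temporal operators preserves eligibility.) Let T_φ be the syntax tree of a CaTL formula φ containing a chain of nodes v_1, …, v_n, each of which is a unary temporal node F_[a_k,b_k] or G_[a_k,b_k], with v_{k−1} the parent of v_k, followed by a conjunction node v (the child of v_n) with children subtrees τ_1, …, τ_m. Let T' be the tree obtained by replacing the subtree rooted at v_1 with the tree ⟨∧ | ⟨G_[a_1,b_1] … G_[a_n,b_n] | τ_i⟩, i = 1,…,m⟩, i.e., a conjunction node whose i-th child is the chain G_[a_1,b_1], …, G_[a_n,b_n] (each temporal node replaced by G with the same time bounds) applied to τ_i; the leaves are unchanged, and for an assignment α on T_φ let α' be the induced assignment on T' (agreeing with α on every leaf). If α' is eligible for T', then α is eligible for T_φ. -/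
open scoped Classical

variable {Q AP Cap J : Type}

/-- A time interval `[a, b]` with `a ≤ b`. -/
structure TInt where
  a : ℕ
  b : ℕ
  hab : a ≤ b

/-- The original chain of unary temporal operators applied to a tree:
`true` stands for always (`G_[a,b]`) and `false` for eventually (`F_[a,b]`). -/
def chainOrig : List (Bool × TInt) → ATree AP Cap J → ATree AP Cap J
  | [], t => t
  | (g, I) :: ops, t =>
      if g then .alw I.a I.b I.hab (chainOrig ops t) else .ev I.a I.b I.hab (chainOrig ops t)

/-- The substituted chain: every temporal operator replaced by always (`G`) with the
same time bounds. -/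
def chainG : List (Bool × TInt) → ATree AP Cap J → ATree AP Cap J
  | [], t => t
  | (_, I) :: ops, t => .alw I.a I.b I.hab (chainG ops t)

lemma ce_chainOrig (caps : J → Finset Cap) (ops : List (Bool × TInt))
    (t : ATree AP Cap J) (c : Cap) :
    (chainOrig ops t).ce caps c = t.ce caps c := by
  induction ops with
  | nil => rfl
  | cons p ops ih =>
      obtain ⟨g, I⟩ := p
      cases g <;> simp [chainOrig, ATree.ce, ih]

lemma ce_chainG (caps : J → Finset Cap) (ops : List (Bool × TInt))
    (t : ATree AP Cap J) (c : Cap) :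
    (chainG ops t).ce caps c = t.ce caps c := by
  induction ops with
  | nil => rfl
  | cons p ops ih => simp [chainG, ATree.ce, ih]

lemma ce_fill_congr (caps : J → Finset Cap) (C : Ctx AP Cap J)
    (t₁ t₂ : ATree AP Cap J) (h : ∀ c, t₁.ce caps c = t₂.ce caps c) :
    ∀ c, (C.fill t₁).ce caps c = (C.fill t₂).ce caps c := by
  induction C <;> intro c <;> simp [Ctx.fill, ATree.ce, h c, *]

/-- swapping a conjunction with an upstream chain of unary temporal
operators (each replaced by `G` with the same time bounds, pushed below the
conjunction onto each child) preserves eligibility: if the transformed tree is eligible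
for the induced assignment, then the original tree is eligible. -/
theorem conjunction_temporal_swap_preserves_eligibility
    (caps : J → Finset Cap) (C : Ctx AP Cap J) (ops : List (Bool × TInt))
    (τ₁ τ₂ : ATree AP Cap J)
    (h : ATree.elig caps (C.fill (.and (chainG ops τ₁) (chainG ops τ₂)))) :
    ATree.elig caps (C.fill (chainOrig ops (.and τ₁ τ₂))) := by
  intro c
  rw [ce_fill_congr caps C _ (.and (chainG ops τ₁) (chainG ops τ₂))
    (fun c => by simp [ce_chainOrig, ATree.ce, ce_chainG]) c]
  exact h c
end

section
/- (Quantitative soundness of the until substitution.) Let x, y : ℕ → ℝ and let t, a, b ∈ ℕ with a ≤ b. Then min( min_{τ ∈ [t, t+b]} x(τ), max_{τ ∈ [t+a, t+b]} y(τ) ) ≤ max_{t' ∈ [t+a, t+b]} min( y(t'), min_{τ ∈ [t, t']} x(τ) ), where all minima and maxima are over the indicated finite intervals of natural numbers (which are nonempty since a ≤ b). -/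
open scoped Classical

/-- quantitative soundness of the until substitution.  The robustness of
`G_[0,b] x ∧ F_[a,b] y` at time `t` is at most the robustness of `x U_[a,b] y` at `t`. -/
theorem robustness_globally_eventually_le_until
    (x y : ℕ → ℝ) (t a b : ℕ) (hab : a ≤ b) :
    min (sInf (x '' Set.Icc t (t + b))) (sSup (y '' Set.Icc (t + a) (t + b))) ≤
      sSup ((fun t' => min (y t') (sInf (x '' Set.Icc t t'))) '' Set.Icc (t + a) (t + b)) := by
  have hne : (Set.Icc (t + a) (t + b)).Nonempty := ⟨t + a, le_refl _, by omega⟩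
  have hfin : (y '' Set.Icc (t + a) (t + b)).Finite :=
    ((Set.finite_Icc _ _).image y)
  have hmem : sSup (y '' Set.Icc (t + a) (t + b)) ∈ y '' Set.Icc (t + a) (t + b) :=
    (hne.image y).csSup_mem hfin
  obtain ⟨t₀, ht₀, hyt₀⟩ := hmem
  have key : min (sInf (x '' Set.Icc t (t + b))) (y t₀) ≤
      min (y t₀) (sInf (x '' Set.Icc t t₀)) := by
    apply le_min (min_le_right _ _)
    refine le_trans (min_le_left _ _) ?_
    apply le_csInf
    · exact (Set.Nonempty.image _ ⟨t, le_refl _, le_trans (Nat.le_add_right t a) ht₀.1⟩)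
    · rintro r ⟨τ, hτ, rfl⟩
      exact csInf_le ((Set.finite_Icc _ _).image x).bddBelow
        ⟨τ, ⟨hτ.1, le_trans hτ.2 ht₀.2⟩, rfl⟩
  calc min (sInf (x '' Set.Icc t (t + b))) (sSup (y '' Set.Icc (t + a) (t + b)))
      = min (sInf (x '' Set.Icc t (t + b))) (y t₀) := by rw [hyt₀]
    _ ≤ min (y t₀) (sInf (x '' Set.Icc t t₀)) := key
    _ ≤ sSup ((fun t' => min (y t') (sInf (x '' Set.Icc t t'))) '' Set.Icc (t + a) (t + b)) :=
        le_csSup (((Set.finite_Icc _ _).image _).bddAbove) ⟨t₀, ht₀, rfl⟩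
end

section
/- (Robustness of a decomposed solution.) Let {J_r}_{r ∈ R} be a nonempty finite family of subsets of the agent set J (every agent keeps the same trajectory), and let {φ_r}_{r ∈ R} be CaTL formulas. Then for every time t ∈ ℕ, ρ(s_J, t, ⋀_{r ∈ R} φ_r) ≥ min over r ∈ R of ρ(s_{J_r}, t, φ_r); i.e., the worst-case robustness of the subteam solutions lower-bounds the robustness of the full team for the conjoined specification. -/
open scoped Classical

variable {Q AP Cap J : Type}

/-- The conjunction `⋀` of a nonempty list of CaTL formulas `φ :: φs`. -/
def bigConj : CaTL AP Cap → List (CaTL AP Cap) → CaTL AP Cap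
  | φ, [] => φ
  | φ, ψ :: l => .and φ (bigConj ψ l)


lemma nAgents_mono (caps : J → Finset Cap) (s : J → ℕ → Option Q)
    {J₁ J₂ : Finset J} (h : J₁ ⊆ J₂) (q : Q) (c : Cap) (t : ℕ) :
    nAgents caps s J₁ q c t ≤ nAgents caps s J₂ q c t :=
  Finset.card_le_card (Finset.filter_subset_filter _ h)

lemma rob_mono (L : Q → Set AP) (caps : J → Finset Cap) (s : J → ℕ → Option Q)
    {J₁ J₂ : Finset J} (h : J₁ ⊆ J₂) (φ : CaTL AP Cap) (t : ℕ) :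
    rob L caps s J₁ φ t ≤ rob L caps s J₂ φ t := by
  induction φ generalizing t with
  | task T =>
    simp only [rob]
    refine iInf₂_mono fun c hc => iInf₂_mono fun τ hτ => iInf₂_mono fun q hq => ?_
    have := nAgents_mono (Q := Q) caps s h q c τ
    exact EReal.coe_le_coe_iff.mpr (by
      exact_mod_cast sub_le_sub_right (by exact_mod_cast this : (nAgents caps s J₁ q c τ : ℤ) ≤ _) _)
  | and φ₁ φ₂ ih₁ ih₂ =>
    simp only [rob]; exact min_le_min (ih₁ t) (ih₂ t)
  | or φ₁ φ₂ ih₁ ih₂ =>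
    simp only [rob]; exact max_le_max (ih₁ t) (ih₂ t)
  | untl a b hab φ₁ φ₂ ih₁ ih₂ =>
    simp only [rob]
    refine iSup₂_mono fun t' ht' => ?_
    exact min_le_min (ih₂ t') (iInf₂_mono fun τ hτ => ih₁ τ)
  | ev a b hab φ ih =>
    simp only [rob]; exact iSup₂_mono fun τ hτ => ih τ
  | alw a b hab φ ih =>
    simp only [rob]; exact iInf₂_mono fun τ hτ => ih τ

/-- robustness of a decomposed solution.  For a nonempty finite family of
subteam/sub-specification pairs (given as the list `p :: ps`, each `J_r ⊆ J`), the
minimum over the family of the subteam robustness lower-bounds the robustness of the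
full team for the conjunction `⋀_r φ_r`, at every time `t`. -/
theorem decomposed_robustness_lower_bound [Fintype Q] [Fintype Cap] [Fintype J]
    (L : Q → Set AP) (caps : J → Finset Cap) (s : J → ℕ → Option Q)
    (p : Finset J × CaTL AP Cap) (ps : List (Finset J × CaTL AP Cap)) (t : ℕ) :
    ((p :: ps).map (fun r => rob L caps s r.1 r.2 t)).foldr min ⊤ ≤
      rob L caps s Finset.univ (bigConj p.2 (ps.map Prod.snd)) t := by
  induction ps generalizing p with
  | nil =>
    simp only [List.map_nil, List.map_cons, List.foldr, bigConj]
    exact le_trans (min_le_left _ _) (rob_mono L caps s (Finset.subset_univ _) _ t)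
  | cons q qs ih =>
    simp only [List.map_cons, List.foldr, bigConj, rob]
    exact min_le_min (rob_mono L caps s (Finset.subset_univ _) _ t) (by
      have := ih q
      simpa using this)
end
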